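/- arXiv:2410.08401 — 2 statements merged into one kernel-verified Lean document; each statement's English description precedes it below -/
import Mathlib

section
/- Let X, X′ ∈ M_{(n+1)×n}(F) and suppose X′ = k·X·k′ for some k ∈ Iw_{n+1} and k′ ∈ Iw_n. Then X satisfies the Minor Condition if and only if X′ satisfies the Minor Condition. -/
open Matrix

noncomputable section

/-- `v` is a surjective discrete (additive) valuation on the field `F` with uniformizer `ϖ`,
with the convention `v 0 = ⊤`. -/
def IsDVal {F : Type*} [Field F] (v : F → WithTop ℤ) (ϖ : F) : Prop :=
  (∀ x : F, v x = ⊤ ↔ x = 0) ∧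
  (∀ x y : F, v (x * y) = v x + v y) ∧
  (∀ x y : F, min (v x) (v y) ≤ v (x + y)) ∧
  (∀ k : ℤ, ∃ x : F, v x = (k : WithTop ℤ)) ∧
  v ϖ = (1 : WithTop ℤ)

/-- `tMat ϖ ν r` is the integer power `t_ν^r` of the matrix `t_ν = diag(ϖ^{ν-1}, …, ϖ, 1)`. -/
def tMat {F : Type*} [Field F] (ϖ : F) (ν : ℕ) (r : ℤ) : Matrix (Fin ν) (Fin ν) F :=
  Matrix.diagonal fun i => ϖ ^ (r * ((ν : ℤ) - 1 - ((i : ℕ) : ℤ)))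

/-- The antidiagonal permutation matrix `w_ν` ((1-based) entries `1` iff `i + j = ν + 1`). -/
def wMat (F : Type*) [Field F] (ν : ℕ) : Matrix (Fin ν) (Fin ν) F :=
  Matrix.of fun i j => if (i : ℕ) + (j : ℕ) + 1 = ν then 1 else 0

/-- `GL_ν(𝒪)`: integral matrices with an integral two-sided inverse. -/
def GLO {F : Type*} [Field F] (v : F → WithTop ℤ) (ν : ℕ) : Set (Matrix (Fin ν) (Fin ν) F) :=
  {g | (∀ i j, 0 ≤ v (g i j)) ∧
    ∃ g' : Matrix (Fin ν) (Fin ν) F, (∀ i j, 0 ≤ v (g' i j)) ∧ g * g' = 1 ∧ g' * g = 1}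

/-- `N°_ν`: integral upper-triangular unipotent matrices. -/
def NO {F : Type*} [Field F] (v : F → WithTop ℤ) (ν : ℕ) : Set (Matrix (Fin ν) (Fin ν) F) :=
  {g | (∀ i j, 0 ≤ v (g i j)) ∧ (∀ i, g i i = 1) ∧ ∀ i j : Fin ν, j < i → g i j = 0}

/-- `N_ν(F)`: all upper-triangular unipotent matrices. -/
def Nfull (F : Type*) [Field F] (ν : ℕ) : Set (Matrix (Fin ν) (Fin ν) F) :=
  {g | (∀ i, g i i = 1) ∧ ∀ i j : Fin ν, j < i → g i j = 0}

/-- The standard Iwahori subgroup `Iw_ν`. -/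
def Iw {F : Type*} [Field F] (v : F → WithTop ℤ) (ν : ℕ) : Set (Matrix (Fin ν) (Fin ν) F) :=
  {g | g ∈ GLO v ν ∧ ∀ i j : Fin ν, j < i → (1 : WithTop ℤ) ≤ v (g i j)}

/-- `K_ν^{(r)} = GL_ν(𝒪) ∩ t_ν^{-r}·GL_ν(𝒪)·t_ν^{r}` (for any `r : ℤ`). -/
def Kpar {F : Type*} [Field F] (v : F → WithTop ℤ) (ϖ : F) (ν : ℕ) (r : ℤ) :
    Set (Matrix (Fin ν) (Fin ν) F) :=
  {g | g ∈ GLO v ν ∧ tMat ϖ ν r * g * tMat ϖ ν (-r) ∈ GLO v ν}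

/-- `K_ν^{⟨r⟩}`. -/
def KparAng {F : Type*} [Field F] (v : F → WithTop ℤ) (ϖ : F) (ν : ℕ) (r : ℤ) :
    Set (Matrix (Fin ν) (Fin ν) F) :=
  {g | g ∈ Kpar v ϖ ν r ∧ ∀ i, ((|r| - 1 : ℤ) : WithTop ℤ) ≤ v (g i i - 1)}

/-- `K_ν^{[r]}`. -/
def KparSq {F : Type*} [Field F] (v : F → WithTop ℤ) (ϖ : F) (ν : ℕ) (r : ℤ) :
    Set (Matrix (Fin ν) (Fin ν) F) :=
  {g | g ∈ Kpar v ϖ ν r ∧ ∀ i, ((|r| : ℤ) : WithTop ℤ) ≤ v (g i i - 1)}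

/-- A subset of a monoid is a subgroup. -/
def IsSubgrp {M : Type*} [Monoid M] (S : Set M) : Prop :=
  (1 : M) ∈ S ∧ (∀ a ∈ S, ∀ b ∈ S, a * b ∈ S) ∧ ∀ a ∈ S, ∃ b ∈ S, a * b = 1 ∧ b * a = 1

/-- A standard deeper Iwahori subgroup: a subgroup `K ⊆ Iw_ν` with `K ∩ N_ν(F) = N°_ν`. -/
def IsStdDeeperIwahori {F : Type*} [Field F] (v : F → WithTop ℤ) (ν : ℕ)
    (K : Set (Matrix (Fin ν) (Fin ν) F)) : Prop :=
  IsSubgrp K ∧ K ⊆ Iw v ν ∧ K ∩ Nfull F ν = NO v ν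

/-- The all-ones column vector of length `n`. -/
def uCol (F : Type*) [Field F] (n : ℕ) : Matrix (Fin n) (Fin 1) F :=
  Matrix.of fun _ _ => 1

/-- The twisting matrix `m = [[w_n, u],[0,1]]`. -/
def mMat (F : Type*) [Field F] (n : ℕ) : Matrix (Fin (n + 1)) (Fin (n + 1)) F :=
  Matrix.reindex finSumFinEquiv finSumFinEquiv
    (Matrix.fromBlocks (wMat F n) (uCol F n) 0 (1 : Matrix (Fin 1) (Fin 1) F))

/-- Block-diagonal embedding `h ↦ diag(h, 1)`. -/
def dg1 {F : Type*} [Field F] {n : ℕ} (h : Matrix (Fin n) (Fin n) F) :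
    Matrix (Fin (n + 1)) (Fin (n + 1)) F :=
  Matrix.reindex finSumFinEquiv finSumFinEquiv
    (Matrix.fromBlocks h 0 0 (1 : Matrix (Fin 1) (Fin 1) F))

/-- The subgroup `K_H^{(r)} ⊆ GL_n(𝒪)`. -/
def KH {F : Type*} [Field F] (v : F → WithTop ℤ) (ϖ : F) (n : ℕ) (r : ℤ) :
    Set (Matrix (Fin n) (Fin n) F) :=
  {h | h ∈ GLO v n ∧ (∀ i j, 0 ≤ v ((tMat ϖ n (-r) * h * tMat ϖ n r) i j)) ∧
    (mMat F n)⁻¹ * dg1 h * mMat F n ∈ Kpar v ϖ (n + 1) (-r)}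

/-- The double-coset set `K₁ · X₀ · K₂`. -/
def KXK {F : Type*} [Field F] {p q : ℕ} (K1 : Set (Matrix (Fin p) (Fin p) F))
    (X0 : Matrix (Fin p) (Fin q) F) (K2 : Set (Matrix (Fin q) (Fin q) F)) :
    Set (Matrix (Fin p) (Fin q) F) :=
  {X | ∃ k ∈ K1, ∃ k' ∈ K2, X = k * X0 * k'}

/-- The antidiagonal rectangular matrix `X°` with `X°_{n+2-i, i} = ϖ^{λ_i}` (1-based indices)
and all other entries `0`. -/
def Xanti {F : Type*} [Field F] (ϖ : F) (n : ℕ) (lam : Fin n → ℤ) :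
    Matrix (Fin (n + 1)) (Fin n) F :=
  Matrix.of fun r j => if (r : ℕ) + (j : ℕ) = n then ϖ ^ (lam j) else 0

/-- `diag(ϖ^{λ_1}, …, ϖ^{λ_ν}) · w_ν`. -/
def Xdw {F : Type*} [Field F] (ϖ : F) (ν : ℕ) (lam : Fin ν → ℤ) : Matrix (Fin ν) (Fin ν) F :=
  Matrix.diagonal (fun i => ϖ ^ (lam i)) * wMat F ν

/-- The rectangular matrix `e_{n+1,n}` with upper `n×n` block the identity and zero last row. -/
def ePad (F : Type*) [Field F] (n : ℕ) : Matrix (Fin (n + 1)) (Fin n) F :=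
  Matrix.of fun i j => if (i : ℕ) = (j : ℕ) then 1 else 0

/-- `λ_1 + ⋯ + λ_r`. -/
def minorSum {n : ℕ} (lam : Fin n → ℤ) (r : ℕ) (hrn : r ≤ n) : ℤ :=
  ∑ i : Fin r, lam (Fin.castLE hrn i)

/-- Row indices of the Southwest-principal `r×r` minor: the last `r` rows. -/
def swRow (n r : ℕ) (hrn : r ≤ n) (i : Fin r) : Fin (n + 1) :=
  ⟨n + 1 - r + (i : ℕ), by have := i.isLt; omega⟩

/-- The Minor Condition (relative to fixed integers `λ_1 < ⋯ < λ_n`). -/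
def MinorCond {F : Type*} [Field F] (v : F → WithTop ℤ) {n : ℕ} (lam : Fin n → ℤ)
    (X : Matrix (Fin (n + 1)) (Fin n) F) : Prop :=
  ∀ r : ℕ, 1 ≤ r → ∀ hrn : r ≤ n,
    (∀ (f : Fin r → Fin (n + 1)) (g : Fin r → Fin n), StrictMono f → StrictMono g →
      ((minorSum lam r hrn : ℤ) : WithTop ℤ) ≤ v ((X.submatrix f g).det)) ∧
    v ((X.submatrix (swRow n r hrn) (Fin.castLE hrn)).det) = ((minorSum lam r hrn : ℤ) : WithTop ℤ)

/-- The Weak Minor Condition: Minor Condition restricted to anchored minors. -/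
def WeakMinorCond {F : Type*} [Field F] (v : F → WithTop ℤ) {n : ℕ} (lam : Fin n → ℤ)
    (X : Matrix (Fin (n + 1)) (Fin n) F) : Prop :=
  ∀ r : ℕ, 1 ≤ r → ∀ hrn : r ≤ n,
    (∀ (f : Fin r → Fin (n + 1)) (g : Fin r → Fin n), StrictMono f → StrictMono g →
      Fin.last n ∈ Set.range f →
      ((minorSum lam r hrn : ℤ) : WithTop ℤ) ≤ v ((X.submatrix f g).det)) ∧
    v ((X.submatrix (swRow n r hrn) (Fin.castLE hrn)).det) = ((minorSum lam r hrn : ℤ) : WithTop ℤ)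

/-- Condition `Z(i)`: `X_{n+2-i', j} = 0` for all `1 ≤ i' ≤ i` and `i' < j ≤ n` (1-based). -/
def CondZ {F : Type*} [Field F] {n : ℕ} (X : Matrix (Fin (n + 1)) (Fin n) F) (i : ℕ) : Prop :=
  ∀ i' j : ℕ, (h1 : 1 ≤ i') → (h2 : i' ≤ i) → (h3 : i' < j) → (h4 : j ≤ n) →
    X ⟨n + 1 - i', by omega⟩ ⟨j - 1, by omega⟩ = 0

/-- Condition `Z'(j)`: `X_{n+2-i, j'} = 0` for all `j + 1 ≤ j' < i ≤ n + 1` (1-based). -/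
def CondZpr {F : Type*} [Field F] {n : ℕ} (X : Matrix (Fin (n + 1)) (Fin n) F) (j : ℕ) : Prop :=
  ∀ j' i : ℕ, (h1 : j + 1 ≤ j') → (h2 : j' < i) → (h3 : i ≤ n + 1) →
    X ⟨n + 1 - i, by omega⟩ ⟨j' - 1, by omega⟩ = 0

/-- `h` is `s`-small. -/
def SSmall {F : Type*} [Field F] (v : F → WithTop ℤ) {n : ℕ} (s : ℤ)
    (h : Matrix (Fin n) (Fin n) F) : Prop :=
  (∀ i, v (h i i) = 0) ∧
  ∀ i j : Fin n, ((|((j : ℕ) : ℤ) - ((i : ℕ) : ℤ)| * s : ℤ) : WithTop ℤ) ≤ v (h i j)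

/-- Block form `[[α, 0], [*, *]]` with `α` of size `i × i` lower triangular with diagonal
entries of valuation `0`. -/
def BlockLowUpTo {F : Type*} [Field F] (v : F → WithTop ℤ) {n : ℕ} (i : ℕ)
    (h : Matrix (Fin n) (Fin n) F) : Prop :=
  (∀ a : Fin n, (a : ℕ) < i → v (h a a) = 0) ∧
  ∀ a b : Fin n, (a : ℕ) < i → (a : ℕ) < (b : ℕ) → h a b = 0

/-- `h` is upper-`s`-small up to row `i`. -/
def UpperSmallUpTo {F : Type*} [Field F] (v : F → WithTop ℤ) {n : ℕ} (s : ℤ) (i : ℕ)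
    (h : Matrix (Fin n) (Fin n) F) : Prop :=
  ∃ hm hp : Matrix (Fin n) (Fin n) F, BlockLowUpTo v i hm ∧ SSmall v s hp ∧ h = hm * hp

/-- `h` is extremely `s`-small. -/
def ExtrSmall {F : Type*} [Field F] (v : F → WithTop ℤ) {n : ℕ} (s : ℤ)
    (h : Matrix (Fin n) (Fin n) F) : Prop :=
  SSmall v s h ∧ Matrix.mulVec (wMat F n * h - 1) (fun _ => (1 : F)) = 0

/-- `h` is lower triangular with diagonal entries of valuation `0`. -/
def LowerUnitTri {F : Type*} [Field F] (v : F → WithTop ℤ) {n : ℕ}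
    (h : Matrix (Fin n) (Fin n) F) : Prop :=
  (∀ a : Fin n, v (h a a) = 0) ∧ ∀ a b : Fin n, a < b → h a b = 0

/-- `h` is lower-`s`-small from column `j` (1-based `j`). -/
def LowerSmallFrom {F : Type*} [Field F] (v : F → WithTop ℤ) {n : ℕ} (s : ℤ) (j : ℕ)
    (h : Matrix (Fin n) (Fin n) F) : Prop :=
  ∀ a b : Fin n, j ≤ (b : ℕ) + 1 → (b : ℕ) < (a : ℕ) →
    (((((a : ℕ) : ℤ) - ((b : ℕ) : ℤ)) * s : ℤ) : WithTop ℤ) ≤ v (h a b)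

/-- Block form `[[α₋, 0], [*, 1]]` with `α₋` of size `(j-1) × (j-1)` lower triangular with
diagonal entries of valuation `0`, and lower-right identity block (1-based `j`). -/
def BlockLowFrom {F : Type*} [Field F] (v : F → WithTop ℤ) {n : ℕ} (j : ℕ)
    (h : Matrix (Fin n) (Fin n) F) : Prop :=
  (∀ a : Fin n, (a : ℕ) < j - 1 → v (h a a) = 0) ∧
  (∀ a b : Fin n, (a : ℕ) < j - 1 → (a : ℕ) < (b : ℕ) → h a b = 0) ∧
  ∀ a b : Fin n, j - 1 ≤ (a : ℕ) → j - 1 ≤ (b : ℕ) → h a b = if a = b then 1 else 0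

/-- The action `X ._s h := diag(t_n^{-s} h^{-w} t_n^{s}, 1) · X · (t_n^{-s} h t_n^{s})`. -/
def actS {F : Type*} [Field F] (ϖ : F) {n : ℕ} (s : ℤ) (X : Matrix (Fin (n + 1)) (Fin n) F)
    (h : Matrix (Fin n) (Fin n) F) : Matrix (Fin (n + 1)) (Fin n) F :=
  dg1 (tMat ϖ n (-s) * (wMat F n * h⁻¹ * (wMat F n)⁻¹) * tMat ϖ n s) * X *
    (tMat ϖ n (-s) * h * tMat ϖ n s)

/-- The residue field `𝒪/(ϖ)` has cardinality `q`. -/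
def ResidueCard {F : Type*} [Field F] (v : F → WithTop ℤ) (q : ℕ) : Prop :=
  ∃ R : Finset F, R.card = q ∧ (∀ x ∈ R, 0 ≤ v x) ∧
    ∀ x : F, 0 ≤ v x → ∃! y, y ∈ R ∧ (1 : WithTop ℤ) ≤ v (x - y)

/-- `H` has index `k` in `G`: there is a transversal of cardinality `k`. -/
def IndexEq {M : Type*} [Monoid M] (H G : Set M) (k : ℕ) : Prop :=
  ∃ T : Finset M, T.card = k ∧ ↑T ⊆ G ∧ ∀ g ∈ G, ∃! t, t ∈ T ∧ ∃ h ∈ H, g = h * t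

def cExp (ν : ℕ) : ℕ := (ν - 1) * ν * (ν + 1) / 6

def dExp (n : ℕ) : ℕ := n * (n + 1) * (2 * n + 1) / 6

/-- The block matrix `B = [[1_n, u],[0,1]]`. -/
def BMat (F : Type*) [Field F] (n : ℕ) : Matrix (Fin (n + 1)) (Fin (n + 1)) F :=
  Matrix.reindex finSumFinEquiv finSumFinEquiv
    (Matrix.fromBlocks (1 : Matrix (Fin n) (Fin n) F) (uCol F n) 0 (1 : Matrix (Fin 1) (Fin 1) F))

/-- The group `G = GL_n(F) × GL_{n+1}(F)` (as a matrix pair monoid). -/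
abbrev GPair (F : Type*) [Field F] (n : ℕ) :=
  Matrix (Fin n) (Fin n) F × Matrix (Fin (n + 1)) (Fin (n + 1)) F

def tPair {F : Type*} [Field F] (ϖ : F) (n : ℕ) : GPair F n :=
  (tMat ϖ n 1, tMat ϖ (n + 1) 1)

def tPairInv {F : Type*} [Field F] (ϖ : F) (n : ℕ) : GPair F n :=
  (tMat ϖ n (-1), tMat ϖ (n + 1) (-1))

/-- `m_s = (t_n^s, m·t_{n+1}^s)`. -/
def mPair {F : Type*} [Field F] (ϖ : F) (n : ℕ) (s : ℤ) : GPair F n :=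
  (tMat ϖ n s, mMat F n * tMat ϖ (n + 1) s)

/-- `ι(h) = (h, diag(h,1))`. -/
def iotaPair {F : Type*} [Field F] {n : ℕ} (h : Matrix (Fin n) (Fin n) F) : GPair F n :=
  (h, dg1 h)

def NOPair {F : Type*} [Field F] (v : F → WithTop ℤ) (n : ℕ) : Set (GPair F n) :=
  {p | p.1 ∈ NO v n ∧ p.2 ∈ NO v (n + 1)}

def KAngPair {F : Type*} [Field F] (v : F → WithTop ℤ) (ϖ : F) (n : ℕ) (r : ℤ) :
    Set (GPair F n) :=
  {p | p.1 ∈ KparAng v ϖ n r ∧ p.2 ∈ KparAng v ϖ (n + 1) r}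

/-- The left coset `g · K`. -/
def lCoset {M : Type*} [Mul M] (g : M) (K : Set M) : Set M := (g * ·) '' K

namespace MCaux

variable {F : Type*} [Field F] {v : F → WithTop ℤ} {ϖ : F}

lemma v_zero (hv : IsDVal v ϖ) : v 0 = ⊤ := (hv.1 0).2 rfl

lemma v_one (hv : IsDVal v ϖ) : v 1 = 0 := by
  have h := hv.2.1 1 1
  rw [one_mul] at h
  have h1 : v 1 ≠ ⊤ := fun hc => one_ne_zero ((hv.1 1).1 hc)
  cases hx : v (1 : F) with
  | top => exact absurd hx h1
  | coe a =>
    rw [hx, ← WithTop.coe_add, WithTop.coe_inj] at h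
    have : a = 0 := by omega
    simp [this]

lemma v_neg (hv : IsDVal v ϖ) (x : F) : v (-x) = v x := by
  have hm : v (-1 : F) = 0 := by
    have h := hv.2.1 (-1) (-1)
    rw [neg_mul_neg, one_mul, v_one hv] at h
    cases hx : v (-1 : F) with
    | top => rw [hx] at h; exact absurd h.symm (by simp)
    | coe a =>
      rw [hx, ← WithTop.coe_add] at h
      have : (0 : ℤ) = a + a := by exact_mod_cast h
      have : a = 0 := by omega
      simp [this]
  calc v (-x) = v ((-1) * x) := by rw [neg_one_mul]
    _ = v (-1) + v x := hv.2.1 _ _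
    _ = v x := by rw [hm, zero_add]

lemma v_prod (hv : IsDVal v ϖ) {ι : Type*} (s : Finset ι) (f : ι → F) :
    v (∏ i ∈ s, f i) = ∑ i ∈ s, v (f i) := by
  classical
  induction s using Finset.cons_induction with
  | empty => simpa using v_one hv
  | cons a s ha ih => rw [Finset.prod_cons, Finset.sum_cons, hv.2.1, ih]

lemma v_sum_ge (hv : IsDVal v ϖ) {ι : Type*} (s : Finset ι) (f : ι → F) (c : WithTop ℤ)
    (h : ∀ i ∈ s, c ≤ v (f i)) : c ≤ v (∑ i ∈ s, f i) := by
  classical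
  induction s using Finset.cons_induction with
  | empty => simp [v_zero hv]
  | cons a s ha ih =>
    rw [Finset.sum_cons]
    refine le_trans ?_ (hv.2.2.1 _ _)
    exact le_min (h a (Finset.mem_cons_self a s)) (ih fun i hi => h i (Finset.mem_cons.2 (Or.inr hi)))

lemma v_add_eq_left (hv : IsDVal v ϖ) {a b : F} (h : v a < v b) : v (a + b) = v a := by
  refine le_antisymm ?_ ?_
  · have h2 : min (v (a + b)) (v (-b)) ≤ v a := by
      have := hv.2.2.1 (a + b) (-b)
      simpa [add_neg_cancel_right] using this
    rw [v_neg hv] at h2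
    rcases min_le_iff.1 h2 with h3 | h3
    · exact h3
    · exact absurd h3 (not_le.2 h)
  · have := hv.2.2.1 a b
    rwa [min_eq_left h.le] at this

lemma v_intsign (hv : IsDVal v ϖ) (u : ℤˣ) (x : F) : v (((u : ℤ) : F) * x) = v x := by
  rcases Int.units_eq_one_or u with h | h <;> rw [h]
  · simp
  · push_cast
    rw [neg_one_mul, v_neg hv]

end MCaux

namespace MCaux

open Equiv Finset

variable {F : Type*} [Field F] {v : F → WithTop ℤ} {ϖ : F}

lemma v_det_nonneg (hv : IsDVal v ϖ) {m : ℕ} (M : Matrix (Fin m) (Fin m) F)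
    (hM : ∀ i j, 0 ≤ v (M i j)) : 0 ≤ v M.det := by
  rw [Matrix.det_apply']
  apply v_sum_ge hv
  intro σ _
  rw [v_intsign hv, v_prod hv]
  exact Finset.sum_nonneg fun i _ => hM _ _

set_option maxHeartbeats 1000000 in
lemma perm_exists_lt {m : ℕ} (σ : Equiv.Perm (Fin m)) (h : σ ≠ 1) : ∃ i, i < σ i := by
  classical
  have hne : (Finset.univ.filter fun x => σ x ≠ x).Nonempty := by
    by_contra hcon
    rw [Finset.not_nonempty_iff_eq_empty, Finset.filter_eq_empty_iff] at hcon
    exact h (Equiv.ext fun x => not_not.1 (hcon (Finset.mem_univ x)))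
  set i := Finset.min' _ hne with hidef
  have hi : σ i ≠ i := (Finset.mem_filter.1 (Finset.min'_mem _ hne)).2
  have hσi : σ (σ i) ≠ σ i := fun hc => hi (σ.injective hc)
  have hle : i ≤ σ i :=
    Finset.min'_le (Finset.univ.filter fun x => σ x ≠ x) (σ i)
      (Finset.mem_filter.2 ⟨Finset.mem_univ _, hσi⟩)
  exact ⟨i, lt_of_le_of_ne hle (Ne.symm hi)⟩

lemma iw_diag (hv : IsDVal v ϖ) {m : ℕ} {k : Matrix (Fin m) (Fin m) F} (hk : k ∈ Iw v m) :
    ∀ i, v (k i i) = 0 := by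
  classical
  obtain ⟨⟨hint, kinv, hkinvint, hmul1, _⟩, hlow⟩ := hk
  have hdet0 : v k.det = 0 := by
    have hsum : v k.det + v kinv.det = 0 := by
      rw [← hv.2.1, ← Matrix.det_mul, hmul1, Matrix.det_one, v_one hv]
    have h1 : 0 ≤ v k.det := v_det_nonneg hv k hint
    have h2 : 0 ≤ v kinv.det := v_det_nonneg hv kinv hkinvint
    refine le_antisymm ?_ h1
    calc v k.det = v k.det + 0 := (add_zero _).symm
      _ ≤ v k.det + v kinv.det := add_le_add (le_refl _) h2
      _ = 0 := hsum
  have hsplit : k.det = (∏ i, k i i) +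
      ∑ σ ∈ Finset.univ.erase (1 : Equiv.Perm (Fin m)),
        ((Equiv.Perm.sign σ : ℤ) : F) * ∏ i, k (σ i) i := by
    rw [Matrix.det_apply', ← Finset.add_sum_erase _ _ (Finset.mem_univ (1 : Equiv.Perm (Fin m)))]
    simp
  have hrest : (1 : WithTop ℤ) ≤ v (∑ σ ∈ Finset.univ.erase (1 : Equiv.Perm (Fin m)),
      ((Equiv.Perm.sign σ : ℤ) : F) * ∏ i, k (σ i) i) := by
    apply v_sum_ge hv
    intro σ hσ
    have hσ1 : σ ≠ 1 := (Finset.mem_erase.1 hσ).1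
    obtain ⟨i₀, hi₀⟩ := perm_exists_lt σ hσ1
    rw [v_intsign hv, v_prod hv]
    calc (1 : WithTop ℤ) ≤ v (k (σ i₀) i₀) := hlow _ _ hi₀
      _ ≤ ∑ i, v (k (σ i) i) :=
        Finset.single_le_sum (fun i _ => hint _ _) (Finset.mem_univ i₀)
  have hprod : v (∏ i, k i i) = 0 := by
    have heq : (∏ i, k i i) = k.det + -(∑ σ ∈ Finset.univ.erase (1 : Equiv.Perm (Fin m)),
        ((Equiv.Perm.sign σ : ℤ) : F) * ∏ i, k (σ i) i) := by
      rw [hsplit]; ring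
    rw [heq, v_add_eq_left hv, hdet0]
    rw [hdet0, v_neg hv]
    exact lt_of_lt_of_le (by exact_mod_cast zero_lt_one) hrest
  intro i
  rw [v_prod hv] at hprod
  refine le_antisymm ?_ (hint i i)
  calc v (k i i) ≤ ∑ j, v (k j j) :=
    Finset.single_le_sum (fun j _ => hint j j) (Finset.mem_univ i)
    _ = 0 := hprod

lemma det_AC {r N : ℕ} (A : Matrix (Fin r) (Fin N) F) (C : Matrix (Fin N) (Fin r) F) :
    (A * C).det = ∑ φ : Fin r → Fin N, (∏ i, A i (φ i)) * (C.submatrix φ id).det := by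
  classical
  have h1 : (A * C).det =
      Matrix.detRowAlternating (R := F) (fun i => ∑ kk : Fin N, A i kk • C kk) := by
    show Matrix.detRowAlternating (A * C) = _
    congr 1
    funext i j
    simp [Matrix.mul_apply]
  rw [h1]
  have h2 := (Matrix.detRowAlternating (R := F) (n := Fin r)).toMultilinearMap.map_sum
    (g := fun (i : Fin r) (kk : Fin N) => A i kk • C kk)
  simp only [AlternatingMap.coe_multilinearMap] at h2
  rw [h2]
  refine Finset.sum_congr rfl fun φ _ => ?_
  have h3 := (Matrix.detRowAlternating (R := F) (n := Fin r)).toMultilinearMap.map_smul_univ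
    (fun i => A i (φ i)) (fun i => C (φ i))
  simp only [AlternatingMap.coe_multilinearMap] at h3
  rw [h3, smul_eq_mul]
  rfl

lemma det_MB {r N : ℕ} (M : Matrix (Fin r) (Fin N) F) (B : Matrix (Fin N) (Fin r) F) :
    (M * B).det = ∑ ψ : Fin r → Fin N, (∏ j, B (ψ j) j) * (M.submatrix id ψ).det := by
  rw [← Matrix.det_transpose, Matrix.transpose_mul, det_AC]
  refine Finset.sum_congr rfl fun ψ _ => ?_
  congr 1
  rw [← Matrix.det_transpose (M.submatrix id ψ), Matrix.transpose_submatrix]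

lemma triple_expand {r n m : ℕ} (A : Matrix (Fin m) (Fin m) F) (X : Matrix (Fin m) (Fin n) F)
    (B : Matrix (Fin n) (Fin n) F) (f : Fin r → Fin m) (g : Fin r → Fin n) :
    ((A * X * B).submatrix f g).det
      = ∑ p : (Fin r → Fin m) × (Fin r → Fin n),
          (∏ i, A (f i) (p.1 i)) * (∏ j, B (p.2 j) (g j)) * (X.submatrix p.1 p.2).det := by
  classical
  have h1 : (A * X * B).submatrix f g = (A.submatrix f id) * (X * (B.submatrix id g)) := by
    ext i j
    simp only [Matrix.submatrix_apply, Matrix.mul_apply, id_eq]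
    simp only [Finset.sum_mul, Finset.mul_sum, mul_assoc]
    rw [Finset.sum_comm]
  rw [h1, det_AC, Fintype.sum_prod_type]
  refine Finset.sum_congr rfl fun φ _ => ?_
  have h2 : ((X * B.submatrix id g).submatrix φ id) = (X.submatrix φ id) * (B.submatrix id g) := by
    ext i j
    simp [Matrix.mul_apply]
  rw [h2, det_MB, Finset.mul_sum]
  refine Finset.sum_congr rfl fun ψ _ => ?_
  rw [Matrix.submatrix_submatrix]
  simp only [Function.comp_id, Function.id_comp, Matrix.submatrix_apply, id_eq]
  ring

lemma inj_eq_of_le {r : ℕ} (a : Fin r → ℕ) (ha : Function.Injective a) (c : ℕ)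
    (hlb : ∀ j, c ≤ a j) (hub : ∀ j, a j ≤ c + r - 1)
    (hcmp : (∀ j : Fin r, c + (j : ℕ) ≤ a j) ∨ ∀ j : Fin r, a j ≤ c + (j : ℕ)) :
    ∀ j, a j = c + (j : ℕ) := by
  classical
  rcases Nat.eq_zero_or_pos r with hr | hr
  · intro j; exact absurd j.isLt (by omega)
  have himg : ∀ (b : Fin r → ℕ), Function.Injective b → (∀ j, c ≤ b j) →
      (∀ j, b j ≤ c + r - 1) → Finset.univ.image b = Finset.Icc c (c + r - 1) := by
    intro b hb h1 h2
    apply Finset.eq_of_subset_of_card_le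
    · intro x hx
      rw [Finset.mem_image] at hx
      obtain ⟨j, _, hj⟩ := hx
      rw [← hj]
      exact Finset.mem_Icc.2 ⟨h1 j, h2 j⟩
    · rw [Finset.card_image_of_injective _ hb, Finset.card_univ, Fintype.card_fin,
        Nat.card_Icc]
      omega
  have hinj2 : Function.Injective (fun j : Fin r => c + (j : ℕ)) := by
    intro x y h
    simp only [add_right_inj] at h
    exact Fin.ext h
  have hsum : ∑ j : Fin r, a j = ∑ j : Fin r, (c + (j : ℕ)) := by
    have h1 : Finset.univ.image a = Finset.univ.image (fun j : Fin r => c + (j : ℕ)) := by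
      rw [himg a ha hlb hub, himg _ hinj2 (fun j => Nat.le_add_right _ _)
        (fun j => by have := j.isLt; omega)]
    have h2 := Finset.sum_image (g := a) (f := id) (s := Finset.univ)
      (fun x _ y _ h => ha h)
    have h3 := Finset.sum_image (g := fun j : Fin r => c + (j : ℕ)) (f := id)
      (s := Finset.univ) (fun x _ y _ h => hinj2 h)
    simp only [id_eq] at h2 h3
    rw [← h2, ← h3, h1]
  intro j
  by_contra hne
  rcases hcmp with hc | hc
  · have hlt : ∑ j : Fin r, (c + (j : ℕ)) < ∑ j : Fin r, a j :=
      Finset.sum_lt_sum (fun i _ => hc i)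
        ⟨j, Finset.mem_univ j, lt_of_le_of_ne (hc j) (fun h => hne h.symm)⟩
    omega
  · have hlt : ∑ j : Fin r, a j < ∑ j : Fin r, (c + (j : ℕ)) :=
      Finset.sum_lt_sum (fun i _ => hc i)
        ⟨j, Finset.mem_univ j, lt_of_le_of_ne (hc j) hne⟩
    omega

lemma psi_case {r n : ℕ} (hrn : r ≤ n) (ψ : Fin r → Fin n) (hinj : Function.Injective ψ)
    (hle : ∀ j, (ψ j : ℕ) ≤ (j : ℕ)) : ψ = Fin.castLE hrn := by
  have h := inj_eq_of_le (fun j => (ψ j : ℕ))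
    (fun x y hxy => hinj (Fin.ext hxy)) 0 (fun j => Nat.zero_le _)
    (fun j => by show (ψ j : ℕ) ≤ 0 + r - 1; have := hle j; have := j.isLt; omega)
    (Or.inr fun j => by show (ψ j : ℕ) ≤ 0 + (j : ℕ); have := hle j; omega)
  funext j
  apply Fin.ext
  have hj := h j
  simpa using hj

lemma phi_case {r n : ℕ} (hr : 1 ≤ r) (hrn : r ≤ n) (φ : Fin r → Fin (n + 1))
    (hinj : Function.Injective φ) (hge : ∀ i : Fin r, n + 1 - r + (i : ℕ) ≤ (φ i : ℕ)) :
    φ = swRow n r hrn := by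
  have h := inj_eq_of_le (fun i => (φ i : ℕ))
    (fun x y hxy => hinj (Fin.ext hxy)) (n + 1 - r)
    (fun i => le_trans (by omega) (hge i))
    (fun i => by show (φ i : ℕ) ≤ n + 1 - r + r - 1; have := (φ i).isLt; omega)
    (Or.inl hge)
  funext i
  apply Fin.ext
  exact h i

lemma mono_factor {r N : ℕ} (φ : Fin r → Fin N) (hφ : Function.Injective φ) :
    ∃ (f : Fin r → Fin N) (σ : Equiv.Perm (Fin r)), StrictMono f ∧ φ = f ∘ σ := by
  classical
  have hcard : (Finset.univ.image φ).card = r := by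
    rw [Finset.card_image_of_injective _ hφ, Finset.card_univ, Fintype.card_fin]
  set e := (Finset.univ.image φ).orderIsoOfFin hcard with he
  have hmem : ∀ i, φ i ∈ Finset.univ.image φ := fun i =>
    Finset.mem_image.2 ⟨i, Finset.mem_univ i, rfl⟩
  set σ0 : Fin r → Fin r := fun i => e.symm ⟨φ i, hmem i⟩ with hσ0
  have hσinj : Function.Injective σ0 := by
    intro a b hab
    apply hφ
    have := congrArg (fun t => ((e t : { x // x ∈ Finset.univ.image φ }) : Fin N)) hab
    simpa [hσ0] using this
  refine ⟨fun i => (e i : Fin N), Equiv.ofBijective σ0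
    ((Fintype.bijective_iff_injective_and_card σ0).2 ⟨hσinj, rfl⟩), ?_, ?_⟩
  · intro a b hab
    exact Subtype.coe_lt_coe.2 (e.strictMono hab)
  · funext i
    show φ i = (e (σ0 i) : Fin N)
    simp [hσ0]

lemma det_sub_zero_rows {m n r : ℕ} (X : Matrix (Fin m) (Fin n) F) (φ : Fin r → Fin m)
    (ψ : Fin r → Fin n) (h : ¬ Function.Injective φ) : (X.submatrix φ ψ).det = 0 := by
  rw [Function.not_injective_iff] at h
  obtain ⟨a, b, hab, hne⟩ := h
  exact Matrix.det_zero_of_row_eq hne (funext fun j => by simp [hab])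

lemma det_sub_zero_cols {m n r : ℕ} (X : Matrix (Fin m) (Fin n) F) (φ : Fin r → Fin m)
    (ψ : Fin r → Fin n) (h : ¬ Function.Injective ψ) : (X.submatrix φ ψ).det = 0 := by
  rw [Function.not_injective_iff] at h
  obtain ⟨a, b, hab, hne⟩ := h
  exact Matrix.det_zero_of_column_eq hne (fun kk => by simp [hab])

lemma det_submatrix_bound (hv : IsDVal v ϖ) {n r : ℕ} (X : Matrix (Fin (n + 1)) (Fin n) F)
    (Λ : WithTop ℤ)
    (hX : ∀ (f : Fin r → Fin (n + 1)) (g : Fin r → Fin n), StrictMono f → StrictMono g →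
      Λ ≤ v ((X.submatrix f g).det))
    (φ : Fin r → Fin (n + 1)) (ψ : Fin r → Fin n) : Λ ≤ v ((X.submatrix φ ψ).det) := by
  by_cases hφ : Function.Injective φ
  swap
  · rw [det_sub_zero_rows X φ ψ hφ, v_zero hv]; exact le_top
  by_cases hψ : Function.Injective ψ
  swap
  · rw [det_sub_zero_cols X φ ψ hψ, v_zero hv]; exact le_top
  obtain ⟨f, σ, hf, hφσ⟩ := mono_factor φ hφ
  obtain ⟨g, τ, hg, hψτ⟩ := mono_factor ψ hψ
  have hXeq : X.submatrix φ ψ = ((X.submatrix f g).submatrix σ id).submatrix id τ := by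
    rw [Matrix.submatrix_submatrix, Matrix.submatrix_submatrix, hφσ, hψτ]
    rfl
  rw [hXeq, Matrix.det_permute', Matrix.det_permute, v_intsign hv, v_intsign hv]
  exact hX f g hf hg

lemma key_ineq (hv : IsDVal v ϖ) {n r : ℕ} (Λ : WithTop ℤ)
    (A : Matrix (Fin (n + 1)) (Fin (n + 1)) F) (hA : ∀ i j, 0 ≤ v (A i j))
    (B : Matrix (Fin n) (Fin n) F) (hB : ∀ i j, 0 ≤ v (B i j))
    (X : Matrix (Fin (n + 1)) (Fin n) F)
    (hX : ∀ (φ : Fin r → Fin (n + 1)) (ψ : Fin r → Fin n), Λ ≤ v ((X.submatrix φ ψ).det))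
    (f : Fin r → Fin (n + 1)) (g : Fin r → Fin n) :
    Λ ≤ v (((A * X * B).submatrix f g).det) := by
  rw [triple_expand]
  apply v_sum_ge hv
  intro p _
  rw [hv.2.1, hv.2.1]
  have h1 : 0 ≤ v (∏ i, A (f i) (p.1 i)) := by
    rw [v_prod hv]; exact Finset.sum_nonneg fun i _ => hA _ _
  have h2 : 0 ≤ v (∏ j, B (p.2 j) (g j)) := by
    rw [v_prod hv]; exact Finset.sum_nonneg fun j _ => hB _ _
  calc Λ = 0 + 0 + Λ := by simp
    _ ≤ v (∏ i, A (f i) (p.1 i)) + v (∏ j, B (p.2 j) (g j)) + v ((X.submatrix p.1 p.2).det) :=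
      add_le_add (add_le_add h1 h2) (hX p.1 p.2)

lemma key_eq (hv : IsDVal v ϖ) {n r : ℕ} (hr : 1 ≤ r) (hrn : r ≤ n)
    {k : Matrix (Fin (n + 1)) (Fin (n + 1)) F} (hk : k ∈ Iw v (n + 1))
    {k' : Matrix (Fin n) (Fin n) F} (hk' : k' ∈ Iw v n)
    (X : Matrix (Fin (n + 1)) (Fin n) F) (Λ : ℤ)
    (hX : ∀ (φ : Fin r → Fin (n + 1)) (ψ : Fin r → Fin n),
      ((Λ : ℤ) : WithTop ℤ) ≤ v ((X.submatrix φ ψ).det)) :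
    v (((k * X * k').submatrix (swRow n r hrn) (Fin.castLE hrn)).det) = ((Λ : ℤ) : WithTop ℤ) ↔
    v ((X.submatrix (swRow n r hrn) (Fin.castLE hrn)).det) = ((Λ : ℤ) : WithTop ℤ) := by
  classical
  set f : Fin r → Fin (n + 1) := swRow n r hrn with hfdef
  set g : Fin r → Fin n := Fin.castLE hrn with hgdef
  set S : F := (X.submatrix f g).det with hSdef
  set p₀ : (Fin r → Fin (n + 1)) × (Fin r → Fin n) := (f, g) with hp₀
  set T : ((Fin r → Fin (n + 1)) × (Fin r → Fin n)) → F := fun p =>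
    (∏ i, k (f i) (p.1 i)) * (∏ j, k' (p.2 j) (g j)) * (X.submatrix p.1 p.2).det with hT
  have hexp : ((k * X * k').submatrix f g).det = T p₀ + ∑ p ∈ Finset.univ.erase p₀, T p := by
    rw [triple_expand]
    exact (Finset.add_sum_erase _ T (Finset.mem_univ p₀)).symm
  have hu : v ((∏ i, k (f i) (f i)) * (∏ j, k' (g j) (g j))) = 0 := by
    rw [hv.2.1, v_prod hv, v_prod hv, Finset.sum_eq_zero (fun i _ => iw_diag hv hk (f i)),
      Finset.sum_eq_zero (fun j _ => iw_diag hv hk' (g j)), add_zero]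
  have hT0 : v (T p₀) = v S := by
    show v ((∏ i, k (f i) (f i)) * (∏ j, k' (g j) (g j)) * S) = v S
    rw [hv.2.1, hu, zero_add]
  have hrest : ((Λ + 1 : ℤ) : WithTop ℤ) ≤ v (∑ p ∈ Finset.univ.erase p₀, T p) := by
    apply v_sum_ge hv
    intro p hp
    have hpne : p ≠ p₀ := (Finset.mem_erase.1 hp).1
    by_cases hdz : (X.submatrix p.1 p.2).det = 0
    · show _ ≤ v (_ * _ * (X.submatrix p.1 p.2).det)
      rw [hdz, mul_zero, v_zero hv]
      exact le_top
    have hφ : Function.Injective p.1 := by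
      by_contra hcon
      exact hdz (det_sub_zero_rows X p.1 p.2 hcon)
    have hψ : Function.Injective p.2 := by
      by_contra hcon
      exact hdz (det_sub_zero_cols X p.1 p.2 hcon)
    have hcoef : (1 : WithTop ℤ) ≤ v ((∏ i, k (f i) (p.1 i)) * (∏ j, k' (p.2 j) (g j))) := by
      rw [hv.2.1]
      by_cases hφeq : p.1 = f
      · have hψne : p.2 ≠ g := by
          intro hc
          exact hpne (Prod.ext hφeq hc)
        have hex : ∃ j : Fin r, (j : ℕ) < (p.2 j : ℕ) := by
          by_contra hcon
          push_neg at hcon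
          exact hψne (psi_case hrn p.2 hψ fun j => hcon j)
        obtain ⟨j₀, hj₀⟩ := hex
        have h1 : (1 : WithTop ℤ) ≤ v (k' (p.2 j₀) (g j₀)) := by
          apply hk'.2
          show (g j₀ : ℕ) < (p.2 j₀ : ℕ)
          simpa [hgdef] using hj₀
        have h2 : (1 : WithTop ℤ) ≤ v (∏ j, k' (p.2 j) (g j)) := by
          rw [v_prod hv]
          calc (1 : WithTop ℤ) ≤ v (k' (p.2 j₀) (g j₀)) := h1
            _ ≤ ∑ j, v (k' (p.2 j) (g j)) :=
              Finset.single_le_sum (fun j _ => hk'.1.1 _ _) (Finset.mem_univ j₀)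
        have h3 : 0 ≤ v (∏ i, k (f i) (p.1 i)) := by
          rw [v_prod hv]; exact Finset.sum_nonneg fun i _ => hk.1.1 _ _
        calc (1 : WithTop ℤ) = 0 + 1 := by simp
          _ ≤ _ := add_le_add h3 h2
      · have hex : ∃ i : Fin r, (p.1 i : ℕ) < n + 1 - r + (i : ℕ) := by
          by_contra hcon
          push_neg at hcon
          exact hφeq (phi_case hr hrn p.1 hφ fun i => hcon i)
        obtain ⟨i₀, hi₀⟩ := hex
        have h1 : (1 : WithTop ℤ) ≤ v (k (f i₀) (p.1 i₀)) := by
          apply hk.2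
          show (p.1 i₀ : ℕ) < (f i₀ : ℕ)
          simpa [hfdef, swRow] using hi₀
        have h2 : (1 : WithTop ℤ) ≤ v (∏ i, k (f i) (p.1 i)) := by
          rw [v_prod hv]
          calc (1 : WithTop ℤ) ≤ v (k (f i₀) (p.1 i₀)) := h1
            _ ≤ ∑ i, v (k (f i) (p.1 i)) :=
              Finset.single_le_sum (fun i _ => hk.1.1 _ _) (Finset.mem_univ i₀)
        have h3 : 0 ≤ v (∏ j, k' (p.2 j) (g j)) := by
          rw [v_prod hv]; exact Finset.sum_nonneg fun j _ => hk'.1.1 _ _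
        calc (1 : WithTop ℤ) = 1 + 0 := by simp
          _ ≤ _ := add_le_add h2 h3
    show _ ≤ v (_ * _ * (X.submatrix p.1 p.2).det)
    rw [hv.2.1]
    have hc1 : ((Λ + 1 : ℤ) : WithTop ℤ) = 1 + ((Λ : ℤ) : WithTop ℤ) := by
      rw [show (Λ + 1 : ℤ) = 1 + Λ by ring, WithTop.coe_add, WithTop.coe_one]
    rw [hc1]
    exact add_le_add hcoef (hX p.1 p.2)
  have hΛlt : ((Λ : ℤ) : WithTop ℤ) < ((Λ + 1 : ℤ) : WithTop ℤ) := by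
    exact_mod_cast lt_add_one Λ
  rw [hexp]
  constructor
  · intro h
    have h2 : v (T p₀) = ((Λ : ℤ) : WithTop ℤ) := by
      have heq : T p₀ = (T p₀ + ∑ p ∈ Finset.univ.erase p₀, T p) +
          -(∑ p ∈ Finset.univ.erase p₀, T p) := by ring
      rw [heq, v_add_eq_left hv, h]
      rw [h, v_neg hv]
      exact lt_of_lt_of_le hΛlt hrest
    rw [← hT0]
    exact h2
  · intro h
    have h2 : v (T p₀) = ((Λ : ℤ) : WithTop ℤ) := hT0.trans h
    rw [v_add_eq_left hv, h2]
    rw [h2]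
    exact lt_of_lt_of_le hΛlt hrest

end MCaux

/-- Lemma 6.2 (1): the Minor Condition is invariant under `Iw_{n+1} × Iw_n`. -/
theorem statement4 {F : Type*} [Field F] (v : F → WithTop ℤ) (ϖ : F) (hval : IsDVal v ϖ)
    (n : ℕ) (hn : 1 ≤ n) (lam : Fin n → ℤ) (hlam : StrictMono lam)
    (X X' : Matrix (Fin (n + 1)) (Fin n) F)
    (k : Matrix (Fin (n + 1)) (Fin (n + 1)) F) (hk : k ∈ Iw v (n + 1))
    (k' : Matrix (Fin n) (Fin n) F) (hk' : k' ∈ Iw v n)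
    (hX' : X' = k * X * k') :
    MinorCond v lam X ↔ MinorCond v lam X' := by
  obtain ⟨hkint, kinv, hkinvint, hkmul1, hkmul2⟩ := hk.1
  obtain ⟨hk'int, k'inv, hk'invint, hk'mul1, hk'mul2⟩ := hk'.1
  have hXeq : X = kinv * X' * k'inv := by
    rw [hX', ← Matrix.mul_assoc kinv (k * X) k', Matrix.mul_assoc (kinv * (k * X)) k' k'inv,
      hk'mul1, Matrix.mul_one, ← Matrix.mul_assoc kinv k X, hkmul2, Matrix.one_mul]
  constructor
  · intro hX r hr hrn
    obtain ⟨hi, he⟩ := hX r hr hrn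
    have hall : ∀ (φ : Fin r → Fin (n + 1)) (ψ : Fin r → Fin n),
        ((minorSum lam r hrn : ℤ) : WithTop ℤ) ≤ v ((X.submatrix φ ψ).det) :=
      MCaux.det_submatrix_bound hval X _ hi
    refine ⟨?_, ?_⟩
    · intro f g _ _
      rw [hX']
      exact MCaux.key_ineq hval _ k hkint k' hk'int X hall f g
    · rw [hX']
      exact (MCaux.key_eq hval hr hrn hk hk' X _ hall).2 he
  · intro hX'c r hr hrn
    obtain ⟨hi, he⟩ := hX'c r hr hrn
    have hall' : ∀ (φ : Fin r → Fin (n + 1)) (ψ : Fin r → Fin n),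
        ((minorSum lam r hrn : ℤ) : WithTop ℤ) ≤ v ((X'.submatrix φ ψ).det) :=
      MCaux.det_submatrix_bound hval X' _ hi
    have hallX : ∀ (φ : Fin r → Fin (n + 1)) (ψ : Fin r → Fin n),
        ((minorSum lam r hrn : ℤ) : WithTop ℤ) ≤ v ((X.submatrix φ ψ).det) := by
      intro φ ψ
      rw [hXeq]
      exact MCaux.key_ineq hval _ kinv hkinvint k'inv hk'invint X' hall' φ ψ
    refine ⟨fun f g _ _ => hallX f g, ?_⟩
    exact (MCaux.key_eq hval hr hrn hk hk' X _ hallX).1 (by rw [← hX']; exact he)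
end
end

section
/- Let X, X′ ∈ M_{(n+1)×n}(F) and suppose X′ = diag(k,1)·X·k′ for some k ∈ Iw_n and k′ ∈ Iw_n, where diag(k,1) ∈ GL_{n+1}(F) is block diagonal with blocks k and 1. Then X satisfies the Weak Minor Condition if and only if X′ satisfies the Weak Minor Condition. -/
open Matrix

noncomputable section

section AuxVal
variable {F : Type*} [Field F] {v : F → WithTop ℤ} {ϖ : F}

lemma vd_zero (hval : IsDVal v ϖ) : v 0 = ⊤ := (hval.1 0).mpr rfl

lemma vd_one (hval : IsDVal v ϖ) : v 1 = 0 := by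
  have h := hval.2.1 1 1
  rw [one_mul] at h
  have h1 : v 1 ≠ ⊤ := fun ht => one_ne_zero ((hval.1 1).mp ht)
  obtain ⟨m, hm⟩ := WithTop.ne_top_iff_exists.mp h1
  rw [← hm] at h ⊢
  have : m = m + m := by exact_mod_cast h
  have : m = 0 := by omega
  exact_mod_cast congrArg (fun x : ℤ => (x : WithTop ℤ)) this

lemma vd_neg (hval : IsDVal v ϖ) (x : F) : v (-x) = v x := by
  have hm1 : v (-1 : F) = 0 := by
    have h := hval.2.1 (-1) (-1)
    rw [neg_one_mul, neg_neg, vd_one hval] at h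
    have h1 : v (-1 : F) ≠ ⊤ := fun ht => by
      have := (hval.1 (-1)).mp ht; simp at this
    obtain ⟨m, hm⟩ := WithTop.ne_top_iff_exists.mp h1
    rw [← hm] at h ⊢
    have : (0 : ℤ) = m + m := by exact_mod_cast h
    have : m = 0 := by omega
    exact_mod_cast congrArg (fun x : ℤ => (x : WithTop ℤ)) this
  rw [show -x = (-1 : F) * x by ring, hval.2.1, hm1, zero_add]

lemma vd_prod (hval : IsDVal v ϖ) {ι : Type*} (s : Finset ι) (f : ι → F) :
    v (∏ i ∈ s, f i) = ∑ i ∈ s, v (f i) := by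
  classical
  induction s using Finset.induction_on with
  | empty => simpa using vd_one hval
  | insert a s h ih =>
    rw [Finset.prod_insert h, Finset.sum_insert h, hval.2.1, ih]

lemma vd_sum_le (hval : IsDVal v ϖ) {ι : Type*} {s : Finset ι} {f : ι → F} {c : WithTop ℤ}
    (h : ∀ i ∈ s, c ≤ v (f i)) : c ≤ v (∑ i ∈ s, f i) := by
  classical
  induction s using Finset.induction_on with
  | empty => simp [vd_zero hval]
  | @insert a s' hnm ih =>
    rw [Finset.sum_insert hnm]
    refine le_trans (le_min (h a (Finset.mem_insert_self a s')) ?_) (hval.2.2.1 _ _)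
    exact ih fun i hi => h i (Finset.mem_insert_of_mem hi)

lemma vd_sign (hval : IsDVal v ϖ) {ι : Type*} [DecidableEq ι] [Fintype ι]
    (σ : Equiv.Perm ι) (x : F) : v (Equiv.Perm.sign σ • x) = v x := by
  rcases Int.units_eq_one_or (Equiv.Perm.sign σ) with h | h <;>
    rw [h] <;> simp [Units.smul_def, vd_neg hval]

lemma vd_sign_mul (hval : IsDVal v ϖ) {ι : Type*} [DecidableEq ι] [Fintype ι]
    (σ : Equiv.Perm ι) (x : F) : v (((Equiv.Perm.sign σ : ℤ) : F) * x) = v x := by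
  rcases Int.units_eq_one_or (Equiv.Perm.sign σ) with h | h <;> rw [h] <;> push_cast <;>
    simp [vd_neg hval]

lemma vd_prod_nonneg (hval : IsDVal v ϖ) {ι : Type*} {s : Finset ι} {f : ι → F}
    (h : ∀ i ∈ s, 0 ≤ v (f i)) : 0 ≤ v (∏ i ∈ s, f i) := by
  rw [vd_prod hval]; exact Finset.sum_nonneg h

lemma vd_prod_ge_one (hval : IsDVal v ϖ) {ι : Type*} [Fintype ι] (f : ι → F)
    (h0 : ∀ a, 0 ≤ v (f a)) (a0 : ι) (h1 : 1 ≤ v (f a0)) : 1 ≤ v (∏ a, f a) := by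
  rw [vd_prod hval]
  exact le_trans h1 (Finset.single_le_sum (fun i _ => h0 i) (Finset.mem_univ a0))

lemma vd_det_ge (hval : IsDVal v ϖ) {m : ℕ} (M : Matrix (Fin m) (Fin m) F) (c : WithTop ℤ)
    (h : ∀ σ : Equiv.Perm (Fin m), c ≤ v (∏ i, M (σ i) i)) : c ≤ v M.det := by
  rw [Matrix.det_apply]
  exact vd_sum_le hval fun σ _ => by rw [vd_sign hval]; exact h σ

lemma vd_det_nonneg (hval : IsDVal v ϖ) {m : ℕ} {M : Matrix (Fin m) (Fin m) F}
    (h : ∀ i j, 0 ≤ v (M i j)) : 0 ≤ v M.det :=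
  vd_det_ge hval M 0 fun σ => vd_prod_nonneg hval fun i _ => h _ _

lemma wt_add_eq_zero {a b : WithTop ℤ} (ha : 0 ≤ a) (hb : 0 ≤ b) (hab : a + b = 0) : a = 0 := by
  induction a using WithTop.recTopCoe with
  | top => simp at hab
  | coe a =>
    induction b using WithTop.recTopCoe with
    | top => simp at hab
    | coe b =>
      have h1 : a + b = 0 := by exact_mod_cast hab
      have h2 : (0 : ℤ) ≤ a := by exact_mod_cast ha
      have h3 : (0 : ℤ) ≤ b := by exact_mod_cast hb
      have : a = 0 := by omega
      exact_mod_cast congrArg (fun x : ℤ => (x : WithTop ℤ)) this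

lemma wt_one_le {a : WithTop ℤ} (h0 : 0 ≤ a) (hne : a ≠ 0) : 1 ≤ a := by
  induction a using WithTop.recTopCoe with
  | top => exact le_top
  | coe a =>
    have h2 : (0 : ℤ) ≤ a := by exact_mod_cast h0
    have h3 : a ≠ 0 := fun h => hne (by exact_mod_cast congrArg (fun x : ℤ => (x : WithTop ℤ)) h)
    have : (1 : ℤ) ≤ a := by omega
    exact_mod_cast this

lemma vd_add_eq (hval : IsDVal v ϖ) {a b : F} {c : ℤ}
    (ha : v a = (c : WithTop ℤ)) (hb : (c : WithTop ℤ) + 1 ≤ v b) : v (a + b) = (c : WithTop ℤ) := by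
  have hcc : (c : WithTop ℤ) < (c : WithTop ℤ) + 1 := by
    rw [show ((c : WithTop ℤ) + 1) = ((c + 1 : ℤ) : WithTop ℤ) by push_cast; ring]
    exact_mod_cast (by omega : c < c + 1)
  have hcb : (c : WithTop ℤ) < v b := lt_of_lt_of_le hcc hb
  have h1 : (c : WithTop ℤ) ≤ v (a + b) := by
    refine le_trans (le_min ha.ge hcb.le) (hval.2.2.1 a b)
  have h2 : v (a + b) ≤ (c : WithTop ℤ) := by
    have h3 := hval.2.2.1 (a + b) (-b)
    rw [add_neg_cancel_right, ha, vd_neg hval] at h3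
    rcases min_le_iff.mp h3 with h | h
    · exact h
    · exact absurd h (not_le.mpr hcb)
  exact le_antisymm h2 h1

end AuxVal

section AuxFin

lemma fin_sm_le {r N : ℕ} {s : Fin r → Fin N} (hs : StrictMono s) (i : Fin r) :
    (i : ℕ) ≤ (s i : ℕ) := by
  suffices h : ∀ m : ℕ, ∀ i : Fin r, (i : ℕ) = m → m ≤ (s i : ℕ) from h _ i rfl
  intro m
  induction m with
  | zero => intro i _; exact Nat.zero_le _
  | succ m ih =>
    intro i hi
    have hir := i.isLt
    have hm : m < r := by omega
    have h1 : (⟨m, hm⟩ : Fin r) < i := by rw [Fin.lt_def]; show m < (i : ℕ); omega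
    have h2 := hs h1
    have h3 : m ≤ (s ⟨m, hm⟩ : ℕ) := ih ⟨m, hm⟩ rfl
    rw [Fin.lt_def] at h2
    omega

lemma fin_sm_ge {r N : ℕ} {s : Fin r → Fin N} (hs : StrictMono s) (i : Fin r) :
    (s i : ℕ) ≤ N - r + (i : ℕ) := by
  have hu : StrictMono (fun j : Fin r => (s j.rev).rev) := by
    intro a b hab
    exact Fin.rev_lt_rev.mpr (hs (Fin.rev_lt_rev.mpr hab))
  have h := fin_sm_le hu i.rev
  simp only [Fin.rev_rev] at h
  rw [Fin.val_rev, Fin.val_rev] at h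
  have h1 := (s i).isLt
  have h2 := i.isLt
  omega

lemma sort_inj {N r : ℕ} (φ : Fin r → Fin N) (hφ : Function.Injective φ) :
    ∃ (s : Fin r → Fin N) (σ : Equiv.Perm (Fin r)), StrictMono s ∧ ∀ i, φ i = s (σ i) := by
  classical
  set T : Finset (Fin N) := Finset.univ.image φ with hT
  have hcard : T.card = r := by
    rw [hT, Finset.card_image_of_injective _ hφ, Finset.card_univ, Fintype.card_fin]
  set e := T.orderIsoOfFin hcard with he
  have hmem : ∀ i, φ i ∈ T := fun i => by
    rw [hT]; exact Finset.mem_image.mpr ⟨i, Finset.mem_univ i, rfl⟩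
  set ρ : Fin r → Fin r := fun i => e.symm ⟨φ i, hmem i⟩ with hρ
  have hρinj : Function.Injective ρ := by
    intro a b hab
    apply hφ
    have := congrArg e hab
    simp only [hρ, OrderIso.apply_symm_apply] at this
    exact congrArg Subtype.val this
  refine ⟨fun i => (e i : Fin N), Equiv.ofBijective ρ (Finite.injective_iff_bijective.mp hρinj),
    ?_, ?_⟩
  · intro a b hab
    exact Subtype.coe_lt_coe.mpr (e.strictMono hab)
  · intro i
    simp only [Equiv.ofBijective_apply, hρ, OrderIso.apply_symm_apply]

lemma inj_top_eq {n r : ℕ} (hrn : r ≤ n) (φ : Fin r → Fin (n + 1))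
    (hφ : Function.Injective φ)
    (hge : ∀ i : Fin r, (swRow n r hrn i : ℕ) ≤ (φ i : ℕ)) : φ = swRow n r hrn := by
  obtain ⟨s, σ, hs, hφs⟩ := sort_inj φ hφ
  have hsum1 : ∑ i : Fin r, (φ i : ℕ) = ∑ i : Fin r, (s i : ℕ) := by
    calc ∑ i : Fin r, (φ i : ℕ) = ∑ i : Fin r, (s (σ i) : ℕ) := by simp [hφs]
      _ = ∑ i : Fin r, (s i : ℕ) := Equiv.sum_comp σ (fun i => (s i : ℕ))
  have hub : ∀ i : Fin r, (s i : ℕ) ≤ (swRow n r hrn i : ℕ) := by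
    intro i
    have := fin_sm_ge hs i
    simp only [swRow]
    omega
  have hle : ∑ i : Fin r, (φ i : ℕ) ≤ ∑ i : Fin r, (swRow n r hrn i : ℕ) := by
    rw [hsum1]; exact Finset.sum_le_sum fun i _ => hub i
  have hge' : ∑ i : Fin r, (swRow n r hrn i : ℕ) ≤ ∑ i : Fin r, (φ i : ℕ) :=
    Finset.sum_le_sum fun i _ => hge i
  have heq := (Finset.sum_eq_sum_iff_of_le (fun i _ => hge i)).mp (le_antisymm hge' hle)
  funext i
  exact (Fin.ext ((heq i (Finset.mem_univ i)).symm) : φ i = swRow n r hrn i)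

lemma inj_bot_eq {n r : ℕ} (hrn : r ≤ n) (ψ : Fin r → Fin n)
    (hψ : Function.Injective ψ)
    (hle : ∀ j : Fin r, (ψ j : ℕ) ≤ (j : ℕ)) : ψ = Fin.castLE hrn := by
  obtain ⟨t, τ, ht, hψt⟩ := sort_inj ψ hψ
  have hsum1 : ∑ j : Fin r, (ψ j : ℕ) = ∑ j : Fin r, (t j : ℕ) := by
    calc ∑ j : Fin r, (ψ j : ℕ) = ∑ j : Fin r, (t (τ j) : ℕ) := by simp [hψt]
      _ = ∑ j : Fin r, (t j : ℕ) := Equiv.sum_comp τ (fun j => (t j : ℕ))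
  have hge' : ∑ j : Fin r, (j : ℕ) ≤ ∑ j : Fin r, (ψ j : ℕ) := by
    rw [hsum1]; exact Finset.sum_le_sum fun j _ => fin_sm_le ht j
  have hle' : ∑ j : Fin r, (ψ j : ℕ) ≤ ∑ j : Fin r, (j : ℕ) :=
    Finset.sum_le_sum fun j _ => hle j
  have heq := (Finset.sum_eq_sum_iff_of_le (fun j _ => hle j)).mp (le_antisymm hle' hge')
  funext j
  exact Fin.ext (heq j (Finset.mem_univ j))

lemma perm_exists_lt {m : ℕ} (σ : Equiv.Perm (Fin m)) (hσ : σ ≠ 1) :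
    ∃ i : Fin m, (i : ℕ) < (σ i : ℕ) := by
  by_contra hcon
  push_neg at hcon
  apply hσ
  have hsum : ∑ i : Fin m, ((σ i : Fin m) : ℕ) = ∑ i : Fin m, (i : ℕ) :=
    Equiv.sum_comp σ (fun i : Fin m => (i : ℕ))
  have heq := (Finset.sum_eq_sum_iff_of_le (fun i _ => hcon i)).mp hsum
  exact Equiv.ext fun i => Fin.ext (heq i (Finset.mem_univ i))

end AuxFin

section AuxDet
variable {F : Type*} [Field F]

lemma det_rows_expand {r N : ℕ} (M : Matrix (Fin r) (Fin N) F) (P : Matrix (Fin N) (Fin r) F) :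
    (M * P).det = ∑ φ : Fin r → Fin N, (∏ i, M i (φ i)) * (P.submatrix φ id).det := by
  have h1 : (M * P) = Matrix.of (fun i => ∑ k, M i k • P k) := by
    ext i j
    simp [Matrix.mul_apply, Finset.sum_apply]
  rw [h1]
  calc (Matrix.detRowAlternating (R := F)).toMultilinearMap (fun i => ∑ k : Fin N, M i k • P k)
      = ∑ φ : Fin r → Fin N,
          (Matrix.detRowAlternating (R := F)).toMultilinearMap (fun i => M i (φ i) • P (φ i)) :=
        (Matrix.detRowAlternating (R := F)).toMultilinearMap.map_sum
          (g := fun (i : Fin r) (k : Fin N) => M i k • P k)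
    _ = _ := by
        refine Finset.sum_congr rfl fun φ _ => ?_
        rw [(Matrix.detRowAlternating (R := F)).toMultilinearMap.map_smul_univ
          (fun i => M i (φ i)) (fun i => P (φ i))]
        rw [smul_eq_mul]
        rfl

lemma det_cols_expand {r N : ℕ} (Q : Matrix (Fin r) (Fin N) F) (B : Matrix (Fin N) (Fin r) F) :
    (Q * B).det = ∑ ψ : Fin r → Fin N, (∏ j, B (ψ j) j) * (Q.submatrix id ψ).det := by
  rw [← Matrix.det_transpose, Matrix.transpose_mul, det_rows_expand]
  refine Finset.sum_congr rfl fun ψ _ => ?_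
  congr 1
  rw [← Matrix.transpose_submatrix, Matrix.det_transpose]

lemma det_AXB {n r : ℕ} (A : Matrix (Fin (n + 1)) (Fin (n + 1)) F)
    (X : Matrix (Fin (n + 1)) (Fin n) F) (B : Matrix (Fin n) (Fin n) F)
    (f : Fin r → Fin (n + 1)) (g : Fin r → Fin n) :
    ((A * X * B).submatrix f g).det
      = ∑ φ : Fin r → Fin (n + 1), ∑ ψ : Fin r → Fin n,
          (∏ i, A (f i) (φ i)) * ((∏ j, B (ψ j) (g j)) * (X.submatrix φ ψ).det) := by
  have h0 : (A * X * B).submatrix f g = A.submatrix f id * ((X * B).submatrix id g) := by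
    rw [Matrix.mul_assoc]
    exact Matrix.submatrix_mul A (X * B) f id g Function.bijective_id
  rw [h0, det_rows_expand]
  refine Finset.sum_congr rfl fun φ _ => ?_
  have h1 : ((X * B).submatrix id g).submatrix φ id = (X.submatrix φ id) * (B.submatrix id g) := by
    rw [Matrix.submatrix_submatrix]
    simp only [Function.comp_id, Function.id_comp]
    exact Matrix.submatrix_mul X B φ id g Function.bijective_id
  rw [h1, det_cols_expand, Finset.mul_sum]
  refine Finset.sum_congr rfl fun ψ _ => ?_
  simp only [Matrix.submatrix_apply, Matrix.submatrix_submatrix, Function.comp_id,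
    Function.id_comp, id_eq]

end AuxDet

section AuxIw
variable {F : Type*} [Field F] {v : F → WithTop ℤ} {ϖ : F}

lemma GLO_det_zero (hval : IsDVal v ϖ) {n : ℕ} {k : Matrix (Fin n) (Fin n) F}
    (hk : k ∈ GLO v n) : v k.det = 0 := by
  obtain ⟨hint, g', hg', hkg, hgk⟩ := hk
  have h1 : 0 ≤ v k.det := vd_det_nonneg hval hint
  have h2 : 0 ≤ v g'.det := vd_det_nonneg hval hg'
  have hsum : v k.det + v g'.det = 0 := by
    rw [← hval.2.1, ← Matrix.det_mul, hkg, Matrix.det_one, vd_one hval]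
  exact wt_add_eq_zero h1 h2 hsum

lemma Iw_diag (hval : IsDVal v ϖ) {n : ℕ} {k : Matrix (Fin n) (Fin n) F}
    (hk : k ∈ Iw v n) (i0 : Fin n) : v (k i0 i0) = 0 := by
  have hint := hk.1.1
  have hsub := hk.2
  have hdet : v k.det = 0 := GLO_det_zero hval hk.1
  by_contra hne
  have hge1 : (1 : WithTop ℤ) ≤ v (k i0 i0) := wt_one_le (hint i0 i0) hne
  have hdiag : (1 : WithTop ℤ) ≤ v (∏ i, k i i) :=
    vd_prod_ge_one hval _ (fun a => hint a a) i0 hge1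
  have hsplit : k.det = (∏ i, k i i) +
      ∑ σ ∈ Finset.univ.erase (1 : Equiv.Perm (Fin n)), Equiv.Perm.sign σ • ∏ i, k (σ i) i := by
    rw [Matrix.det_apply, ← Finset.add_sum_erase _ _ (Finset.mem_univ (1 : Equiv.Perm (Fin n)))]
    simp
  have hrest : (1 : WithTop ℤ) ≤
      v (∑ σ ∈ Finset.univ.erase (1 : Equiv.Perm (Fin n)), Equiv.Perm.sign σ • ∏ i, k (σ i) i) := by
    refine vd_sum_le hval fun σ hσ => ?_
    have hσ1 : σ ≠ 1 := (Finset.mem_erase.mp hσ).1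
    obtain ⟨i1, hi1⟩ := perm_exists_lt σ hσ1
    rw [vd_sign hval]
    exact vd_prod_ge_one hval _ (fun a => hint _ _) i1 (hsub _ _ (Fin.lt_def.mpr hi1))
  have : (1 : WithTop ℤ) ≤ v k.det := by
    rw [hsplit]
    exact le_trans (le_min hdiag hrest) (hval.2.2.1 _ _)
  rw [hdet] at this
  exact absurd (by exact_mod_cast this : (1 : ℤ) ≤ 0) (by omega)

lemma Iw_inv (hval : IsDVal v ϖ) {n : ℕ} {k : Matrix (Fin n) (Fin n) F}
    (hk : k ∈ Iw v n) : ∃ k2 ∈ Iw v n, k * k2 = 1 ∧ k2 * k = 1 := by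
  obtain ⟨⟨hint, g', hg', hkg, hgk⟩, hsub⟩ := hk
  refine ⟨g', ⟨⟨hg', k, hint, hgk, hkg⟩, ?_⟩, hkg, hgk⟩
  intro i j hji
  have hdet : v k.det = 0 := GLO_det_zero hval ⟨hint, g', hg', hkg, hgk⟩
  have hk0 : k.det ≠ 0 := by
    intro h
    rw [h, vd_zero hval] at hdet
    simp at hdet
  have hginv : g' = k⁻¹ := (Matrix.inv_eq_right_inv hkg).symm
  have hvinv : v (k.det⁻¹) = 0 := by
    have h := hval.2.1 k.det k.det⁻¹
    rw [mul_inv_cancel₀ hk0, vd_one hval, hdet, zero_add] at h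
    exact h.symm
  rw [hginv, Matrix.inv_def, Matrix.smul_apply, Ring.inverse_eq_inv, smul_eq_mul, hval.2.1,
    hvinv, zero_add, Matrix.adjugate_apply]
  refine vd_det_ge hval _ 1 fun σ => ?_
  by_cases ha0 : σ.symm j = i
  · have hσi : σ i = j := by rw [← ha0, Equiv.apply_symm_apply]
    have hexists : ∃ b : Fin n, b ≠ i ∧ (b : ℕ) < (σ b : ℕ) := by
      by_contra hcon
      push_neg at hcon
      have hsum : ∑ x : Fin n, ((σ x : Fin n) : ℕ) = ∑ x : Fin n, (x : ℕ) :=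
        Equiv.sum_comp σ (fun x : Fin n => (x : ℕ))
      have h1 : ((σ i : Fin n) : ℕ) + ∑ x ∈ Finset.univ.erase i, ((σ x : Fin n) : ℕ)
          = ∑ x : Fin n, ((σ x : Fin n) : ℕ) :=
        Finset.add_sum_erase _ (fun x : Fin n => ((σ x : Fin n) : ℕ)) (Finset.mem_univ i)
      have h2 : (i : ℕ) + ∑ x ∈ Finset.univ.erase i, (x : ℕ) = ∑ x : Fin n, (x : ℕ) :=
        Finset.add_sum_erase _ (fun x : Fin n => (x : ℕ)) (Finset.mem_univ i)
      have h3 : ∑ x ∈ Finset.univ.erase i, ((σ x : Fin n) : ℕ)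
          ≤ ∑ x ∈ Finset.univ.erase i, (x : ℕ) :=
        Finset.sum_le_sum fun b hb => hcon b (Finset.mem_erase.mp hb).1
      have h4 : ((σ i : Fin n) : ℕ) = (j : ℕ) := by rw [hσi]
      have h5 : (j : ℕ) < (i : ℕ) := hji
      omega
    obtain ⟨b, hbne, hblt⟩ := hexists
    refine vd_prod_ge_one hval _ ?_ b ?_
    · intro a
      by_cases h : σ a = j
      · have : a = σ.symm j := by rw [← h, Equiv.symm_apply_apply]
        rw [h]
        rw [Matrix.updateRow_self]
        by_cases hai : a = i
        · rw [hai, Pi.single_eq_same]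
          rw [vd_one hval]
        · rw [Pi.single_eq_of_ne hai]
          rw [vd_zero hval]
          exact le_top
      · rw [Matrix.updateRow_ne h]
        exact hint _ _
    · have hbj : σ b ≠ j := fun h => hbne (by rw [← ha0, ← h, Equiv.symm_apply_apply])
      rw [Matrix.updateRow_ne hbj]
      exact hsub _ _ (Fin.lt_def.mpr hblt)
  · have hfac : (k.updateRow j (Pi.single i 1)) (σ (σ.symm j)) (σ.symm j) = 0 := by
      rw [Equiv.apply_symm_apply, Matrix.updateRow_self, Pi.single_eq_of_ne ha0]
    have : (∏ a, (k.updateRow j (Pi.single i 1)) (σ a) a) = 0 :=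
      Finset.prod_eq_zero (Finset.mem_univ (σ.symm j)) hfac
    rw [this, vd_zero hval]
    exact le_top

end AuxIw

section AuxDg1
variable {F : Type*} [Field F] {v : F → WithTop ℤ} {ϖ : F}

lemma dg1_apply {n : ℕ} (h : Matrix (Fin n) (Fin n) F) (i j : Fin (n + 1)) :
    dg1 h i j = if hi : (i : ℕ) < n then (if hj : (j : ℕ) < n then h ⟨i, hi⟩ ⟨j, hj⟩ else 0)
      else (if (j : ℕ) < n then 0 else 1) := by
  have key : ∀ a : Fin (n + 1), finSumFinEquiv.symm a =
      if ha : (a : ℕ) < n then Sum.inl (⟨a, ha⟩ : Fin n) else Sum.inr (0 : Fin 1) := by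
    intro a
    by_cases ha : (a : ℕ) < n
    · rw [dif_pos ha, Equiv.symm_apply_eq]
      exact Fin.ext (by simp)
    · have han : (a : ℕ) = n := by have := a.isLt; omega
      rw [dif_neg ha, Equiv.symm_apply_eq]
      exact Fin.ext (by simp [han])
  unfold dg1
  rw [Matrix.reindex_apply, Matrix.submatrix_apply, key i, key j]
  by_cases hi : (i : ℕ) < n <;> by_cases hj : (j : ℕ) < n <;>
    simp [hi, hj, Matrix.fromBlocks_apply₁₁, Matrix.fromBlocks_apply₁₂,
      Matrix.fromBlocks_apply₂₁, Matrix.fromBlocks_apply₂₂, Matrix.one_apply]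

lemma dg1_int (hval : IsDVal v ϖ) {n : ℕ} {k : Matrix (Fin n) (Fin n) F}
    (hint : ∀ i j, 0 ≤ v (k i j)) : ∀ i j, 0 ≤ v (dg1 k i j) := by
  intro i j
  rw [dg1_apply]
  split_ifs
  · exact hint _ _
  · rw [vd_zero hval]; exact le_top
  · rw [vd_zero hval]; exact le_top
  · rw [vd_one hval]

lemma dg1_sub (hval : IsDVal v ϖ) {n : ℕ} {k : Matrix (Fin n) (Fin n) F}
    (hsub : ∀ i j : Fin n, j < i → (1 : WithTop ℤ) ≤ v (k i j)) :
    ∀ i j : Fin (n + 1), j < i → (1 : WithTop ℤ) ≤ v (dg1 k i j) := by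
  intro i j hji
  rw [Fin.lt_def] at hji
  rw [dg1_apply]
  split_ifs with h1 h2 h3
  · exact hsub _ _ (Fin.lt_def.mpr hji)
  · exfalso; omega
  · rw [vd_zero hval]; exact le_top
  · exfalso; have hi4 := i.isLt; have hj4 := j.isLt; omega

lemma dg1_last {n : ℕ} (k : Matrix (Fin n) (Fin n) F) (j : Fin (n + 1))
    (hj : j ≠ Fin.last n) : dg1 k (Fin.last n) j = 0 := by
  rw [dg1_apply]
  have hlast : ¬((Fin.last n : ℕ) < n) := by simp
  rw [dif_neg hlast]
  have hjn : (j : ℕ) < n := by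
    have := j.isLt
    have : (j : ℕ) ≠ n := fun h => hj (Fin.ext (by simp [h]))
    omega
  rw [if_pos hjn]

lemma dg1_diag (hval : IsDVal v ϖ) {n : ℕ} {k : Matrix (Fin n) (Fin n) F}
    (hdiag : ∀ i, v (k i i) = 0) : ∀ i : Fin (n + 1), v (dg1 k i i) = 0 := by
  intro i
  rw [dg1_apply]
  split_ifs with h1 h2
  · exact hdiag _
  · exact vd_one hval

lemma dg1_mul {n : ℕ} (a b : Matrix (Fin n) (Fin n) F) : dg1 a * dg1 b = dg1 (a * b) := by
  unfold dg1
  rw [Matrix.reindex_apply, Matrix.reindex_apply, Matrix.reindex_apply,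
    Matrix.submatrix_mul_equiv, Matrix.fromBlocks_multiply]
  simp

lemma dg1_one {n : ℕ} : dg1 (1 : Matrix (Fin n) (Fin n) F) = 1 := by
  unfold dg1
  rw [Matrix.fromBlocks_one, Matrix.reindex_apply, Matrix.submatrix_one_equiv]

end AuxDg1

section Main
variable {F : Type*} [Field F] {v : F → WithTop ℤ} {ϖ : F}

lemma vdet_sorted (hval : IsDVal v ϖ) {n r : ℕ} (lam : Fin n → ℤ) (hr : 1 ≤ r) (hrn : r ≤ n)
    {X : Matrix (Fin (n + 1)) (Fin n) F} (hX : WeakMinorCond v lam X)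
    {φ : Fin r → Fin (n + 1)} {ψ : Fin r → Fin n}
    (hφ : Function.Injective φ) (hψ : Function.Injective ψ)
    (hrange : Fin.last n ∈ Set.range φ) :
    ((minorSum lam r hrn : ℤ) : WithTop ℤ) ≤ v ((X.submatrix φ ψ).det) := by
  obtain ⟨s, σ, hs, hφs⟩ := sort_inj φ hφ
  obtain ⟨t, τ, ht, hψt⟩ := sort_inj ψ hψ
  have hsub : X.submatrix φ ψ = ((X.submatrix s t).submatrix σ id).submatrix id τ := by
    have h1 : φ = s ∘ ⇑σ ∘ id := funext fun i => hφs i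
    have h2 : ψ = t ∘ id ∘ ⇑τ := funext fun j => hψt j
    rw [Matrix.submatrix_submatrix, Matrix.submatrix_submatrix, ← h1, ← h2]
  have hanchs : Fin.last n ∈ Set.range s := by
    obtain ⟨i0, hi0⟩ := hrange
    exact ⟨σ i0, by rw [← hφs, hi0]⟩
  have hD := (hX r hr hrn).1 s t hs ht hanchs
  have hdet : v ((X.submatrix φ ψ).det) = v ((X.submatrix s t).det) := by
    rw [hsub, Matrix.det_permute', Matrix.det_permute, vd_sign_mul hval, vd_sign_mul hval]
  rw [hdet]
  exact hD

lemma term_ge (hval : IsDVal v ϖ) {n r : ℕ} (lam : Fin n → ℤ) (hr : 1 ≤ r) (hrn : r ≤ n)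
    {X : Matrix (Fin (n + 1)) (Fin n) F} (hX : WeakMinorCond v lam X)
    {A : Matrix (Fin (n + 1)) (Fin (n + 1)) F} {B : Matrix (Fin n) (Fin n) F}
    (hA0 : ∀ i j, 0 ≤ v (A i j)) (hAlast : ∀ j, j ≠ Fin.last n → A (Fin.last n) j = 0)
    (hB0 : ∀ i j, 0 ≤ v (B i j))
    (f : Fin r → Fin (n + 1)) (g : Fin r → Fin n) (hanch : Fin.last n ∈ Set.range f)
    (φ : Fin r → Fin (n + 1)) (ψ : Fin r → Fin n) :
    ((minorSum lam r hrn : ℤ) : WithTop ℤ)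
      ≤ v ((∏ i, A (f i) (φ i)) * ((∏ j, B (ψ j) (g j)) * (X.submatrix φ ψ).det)) := by
  by_cases hφ : Function.Injective φ
  · by_cases hψ : Function.Injective ψ
    · by_cases hrange : Fin.last n ∈ Set.range φ
      · rw [hval.2.1, hval.2.1]
        have hD := vdet_sorted hval lam hr hrn hX hφ hψ hrange
        calc ((minorSum lam r hrn : ℤ) : WithTop ℤ)
            = 0 + (0 + ((minorSum lam r hrn : ℤ) : WithTop ℤ)) := by simp
          _ ≤ _ := add_le_add (vd_prod_nonneg hval fun i _ => hA0 _ _)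
              (add_le_add (vd_prod_nonneg hval fun j _ => hB0 _ _) hD)
      · obtain ⟨i0, hi0⟩ := hanch
        have h0 : A (f i0) (φ i0) = 0 := by
          rw [hi0]
          exact hAlast _ (fun hc => hrange ⟨i0, hc⟩)
        have hz : (∏ i, A (f i) (φ i)) = 0 := Finset.prod_eq_zero (Finset.mem_univ i0) h0
        rw [hz, zero_mul, vd_zero hval]
        exact le_top
    · rw [Function.not_injective_iff] at hψ
      obtain ⟨j1, j2, hj12, hne⟩ := hψ
      have hz : (X.submatrix φ ψ).det = 0 :=
        Matrix.det_zero_of_column_eq hne (fun kk => by simp [Matrix.submatrix_apply, hj12])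
      rw [hz, mul_zero, mul_zero, vd_zero hval]
      exact le_top
  · rw [Function.not_injective_iff] at hφ
    obtain ⟨i1, i2, hi12, hne⟩ := hφ
    have hz : (X.submatrix φ ψ).det = 0 :=
      Matrix.det_zero_of_row_eq hne (by funext jj; simp [Matrix.submatrix_apply, hi12])
    rw [hz, mul_zero, mul_zero, vd_zero hval]
    exact le_top

lemma swRow_last {n r : ℕ} (hr : 1 ≤ r) (hrn : r ≤ n) :
    swRow n r hrn ⟨r - 1, by omega⟩ = Fin.last n := by
  apply Fin.ext
  simp [swRow, Fin.last]
  omega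

lemma term_ge_strict (hval : IsDVal v ϖ) {n r : ℕ} (lam : Fin n → ℤ) (hr : 1 ≤ r) (hrn : r ≤ n)
    {X : Matrix (Fin (n + 1)) (Fin n) F} (hX : WeakMinorCond v lam X)
    {A : Matrix (Fin (n + 1)) (Fin (n + 1)) F} {B : Matrix (Fin n) (Fin n) F}
    (hA0 : ∀ i j, 0 ≤ v (A i j)) (hAlast : ∀ j, j ≠ Fin.last n → A (Fin.last n) j = 0)
    (hA1 : ∀ i j : Fin (n + 1), j < i → (1 : WithTop ℤ) ≤ v (A i j))
    (hB0 : ∀ i j, 0 ≤ v (B i j))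
    (hB1 : ∀ i j : Fin n, j < i → (1 : WithTop ℤ) ≤ v (B i j))
    (φ : Fin r → Fin (n + 1)) (ψ : Fin r → Fin n)
    (hne : ¬(φ = swRow n r hrn ∧ ψ = Fin.castLE hrn)) :
    ((minorSum lam r hrn : ℤ) : WithTop ℤ) + 1
      ≤ v ((∏ i, A (swRow n r hrn i) (φ i)) *
          ((∏ j, B (ψ j) (Fin.castLE hrn j)) * (X.submatrix φ ψ).det)) := by
  have hanch : Fin.last n ∈ Set.range (swRow n r hrn) := ⟨⟨r - 1, by omega⟩, swRow_last hr hrn⟩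
  by_cases hφ : Function.Injective φ
  · by_cases hψ : Function.Injective ψ
    · by_cases hrange : Fin.last n ∈ Set.range φ
      · have hD := vdet_sorted hval lam hr hrn hX hφ hψ hrange
        rw [hval.2.1, hval.2.1]
        by_cases hφf : φ = swRow n r hrn
        · have hψg : ψ ≠ Fin.castLE hrn := fun h => hne ⟨hφf, h⟩
          have hex : ∃ j : Fin r, (j : ℕ) < (ψ j : ℕ) := by
            by_contra hcon
            push_neg at hcon
            exact hψg (inj_bot_eq hrn ψ hψ hcon)
          obtain ⟨j0, hj0⟩ := hex
          have h1 : (1 : WithTop ℤ) ≤ v (B (ψ j0) (Fin.castLE hrn j0)) := by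
            apply hB1
            rw [Fin.lt_def]
            simpa using hj0
          have hcB : (1 : WithTop ℤ) ≤ v (∏ j, B (ψ j) (Fin.castLE hrn j)) :=
            vd_prod_ge_one hval _ (fun a => hB0 _ _) j0 h1
          calc ((minorSum lam r hrn : ℤ) : WithTop ℤ) + 1
              = 0 + (1 + ((minorSum lam r hrn : ℤ) : WithTop ℤ)) := by rw [add_comm]; simp
            _ ≤ _ := add_le_add (vd_prod_nonneg hval fun i _ => hA0 _ _) (add_le_add hcB hD)
        · have hex : ∃ i : Fin r, (φ i : ℕ) < (swRow n r hrn i : ℕ) := by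
            by_contra hcon
            push_neg at hcon
            exact hφf (inj_top_eq hrn φ hφ hcon)
          obtain ⟨i0, hi0⟩ := hex
          have h1 : (1 : WithTop ℤ) ≤ v (A (swRow n r hrn i0) (φ i0)) :=
            hA1 _ _ (Fin.lt_def.mpr hi0)
          have hcA : (1 : WithTop ℤ) ≤ v (∏ i, A (swRow n r hrn i) (φ i)) :=
            vd_prod_ge_one hval _ (fun a => hA0 _ _) i0 h1
          calc ((minorSum lam r hrn : ℤ) : WithTop ℤ) + 1
              = 1 + (0 + ((minorSum lam r hrn : ℤ) : WithTop ℤ)) := by rw [add_comm]; simp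
            _ ≤ _ := add_le_add hcA
                (add_le_add (vd_prod_nonneg hval fun j _ => hB0 _ _) hD)
      · obtain ⟨i0, hi0⟩ := hanch
        have h0 : A (swRow n r hrn i0) (φ i0) = 0 := by
          rw [hi0]
          exact hAlast _ (fun hc => hrange ⟨i0, hc⟩)
        have hz : (∏ i, A (swRow n r hrn i) (φ i)) = 0 :=
          Finset.prod_eq_zero (Finset.mem_univ i0) h0
        rw [hz, zero_mul, vd_zero hval]
        exact le_top
    · rw [Function.not_injective_iff] at hψ
      obtain ⟨j1, j2, hj12, hnej⟩ := hψ
      have hz : (X.submatrix φ ψ).det = 0 :=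
        Matrix.det_zero_of_column_eq hnej (fun kk => by simp [Matrix.submatrix_apply, hj12])
      rw [hz, mul_zero, mul_zero, vd_zero hval]
      exact le_top
  · rw [Function.not_injective_iff] at hφ
    obtain ⟨i1, i2, hi12, hnei⟩ := hφ
    have hz : (X.submatrix φ ψ).det = 0 :=
      Matrix.det_zero_of_row_eq hnei (by funext jj; simp [Matrix.submatrix_apply, hi12])
    rw [hz, mul_zero, mul_zero, vd_zero hval]
    exact le_top

end Main

section Final
variable {F : Type*} [Field F] {v : F → WithTop ℤ} {ϖ : F}

lemma WMC_mul (hval : IsDVal v ϖ) {n : ℕ} (lam : Fin n → ℤ)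
    {X : Matrix (Fin (n + 1)) (Fin n) F} {k k' : Matrix (Fin n) (Fin n) F}
    (hk : k ∈ Iw v n) (hk' : k' ∈ Iw v n) (hX : WeakMinorCond v lam X) :
    WeakMinorCond v lam (dg1 k * X * k') := by
  have hA0 : ∀ i j, 0 ≤ v (dg1 k i j) := dg1_int hval hk.1.1
  have hA1 : ∀ i j : Fin (n + 1), j < i → (1 : WithTop ℤ) ≤ v (dg1 k i j) :=
    dg1_sub hval hk.2
  have hAlast : ∀ j, j ≠ Fin.last n → dg1 k (Fin.last n) j = 0 := dg1_last k
  have hAdiag : ∀ i, v (dg1 k i i) = 0 := dg1_diag hval (Iw_diag hval hk)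
  have hB0 : ∀ i j, 0 ≤ v (k' i j) := hk'.1.1
  have hB1 : ∀ i j : Fin n, j < i → (1 : WithTop ℤ) ≤ v (k' i j) := hk'.2
  have hBdiag : ∀ j, v (k' j j) = 0 := Iw_diag hval hk'
  intro r hr hrn
  constructor
  · intro f g hf hg hanch
    rw [det_AXB]
    refine vd_sum_le hval fun φ _ => vd_sum_le hval fun ψ _ => ?_
    exact term_ge hval lam hr hrn hX hA0 hAlast hB0 f g hanch φ ψ
  · rw [det_AXB]
    rw [← Finset.sum_product' (s := Finset.univ) (t := Finset.univ)
      (f := fun φ ψ => (∏ i, dg1 k (swRow n r hrn i) (φ i)) *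
        ((∏ j, k' (ψ j) (Fin.castLE hrn j)) * (X.submatrix φ ψ).det))]
    have hp0 : ((swRow n r hrn, Fin.castLE hrn) :
        (Fin r → Fin (n + 1)) × (Fin r → Fin n)) ∈ Finset.univ ×ˢ Finset.univ :=
      Finset.mem_product.mpr ⟨Finset.mem_univ _, Finset.mem_univ _⟩
    rw [← Finset.add_sum_erase _ _ hp0]
    apply vd_add_eq hval
    · -- main term
      rw [hval.2.1, hval.2.1]
      have hA : v (∏ i, dg1 k (swRow n r hrn i) (swRow n r hrn i)) = 0 := by
        rw [vd_prod hval]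
        exact Finset.sum_eq_zero fun i _ => hAdiag _
      have hB : v (∏ j, k' (Fin.castLE hrn j) (Fin.castLE hrn j)) = 0 := by
        rw [vd_prod hval]
        exact Finset.sum_eq_zero fun j _ => hBdiag _
      rw [hA, hB, zero_add, zero_add]
      exact (hX r hr hrn).2
    · -- the rest
      refine vd_sum_le hval fun p hp => ?_
      have hpne := (Finset.mem_erase.mp hp).1
      have hne : ¬(p.1 = swRow n r hrn ∧ p.2 = Fin.castLE hrn) := by
        intro ⟨h1, h2⟩
        exact hpne (Prod.ext h1 h2)
      exact term_ge_strict hval lam hr hrn hX hA0 hAlast hA1 hB0 hB1 p.1 p.2 hne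

end Final

/-- Lemma 6.2 (2): the Weak Minor Condition is invariant under `diag(Iw_n, 1) × Iw_n`. -/
theorem statement5 {F : Type*} [Field F] (v : F → WithTop ℤ) (ϖ : F) (hval : IsDVal v ϖ)
    (n : ℕ) (hn : 1 ≤ n) (lam : Fin n → ℤ) (hlam : StrictMono lam)
    (X X' : Matrix (Fin (n + 1)) (Fin n) F)
    (k : Matrix (Fin n) (Fin n) F) (hk : k ∈ Iw v n)
    (k' : Matrix (Fin n) (Fin n) F) (hk' : k' ∈ Iw v n)
    (hX' : X' = dg1 k * X * k') :
    WeakMinorCond v lam X ↔ WeakMinorCond v lam X' := by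
  obtain ⟨k2, hk2, hkk2, hk2k⟩ := Iw_inv hval hk
  obtain ⟨k2', hk2', hk'k2', hk2'k'⟩ := Iw_inv hval hk'
  constructor
  · intro h
    rw [hX']
    exact WMC_mul hval lam hk hk' h
  · intro h
    have hXX : X = dg1 k2 * X' * k2' := by
      rw [hX']
      simp only [← Matrix.mul_assoc]
      rw [dg1_mul, hk2k, dg1_one, Matrix.one_mul, Matrix.mul_assoc, hk'k2', Matrix.mul_one]
    rw [hXX]
    exact WMC_mul hval lam hk2 hk2' h
end
end
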